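/- Every prismatic graph in the class F_9 admits a hitting set of its triangles of cardinality at most 3; indeed {r^3_2, r^3_3, s^1_1} is such a hitting set. -/

import Mathlib

/-- A graph is prismatic if for every triangle, every vertex not in the triangle
has exactly one neighbour in the triangle. -/
def Prismatic {V : Type*} (G : SimpleGraph V) : Prop :=
  ∀ a b c v : V, G.Adj a b → G.Adj a c → G.Adj b c →
    v ≠ a → v ≠ b → v ≠ c → ∃! u, u ∈ ({a, b, c} : Set V) ∧ G.Adj v u

/-- The complement of the Schläfli graph: vertices are triples (tile, line, column);
tile 0 holds the vertices r^i_j, tile 1 the vertices s^i_j, tile 2 the vertices t^i_j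
(indices shifted to start at 0). -/
def SchlafliC : SimpleGraph (Fin 3 × Fin 3 × Fin 3) where
  Adj x y :=
    (x.1 = y.1 ∧ x.2.1 ≠ y.2.1 ∧ x.2.2 ≠ y.2.2) ∨
    (y.1 = x.1 + 1 ∧ x.2.2 = y.2.1) ∨
    (x.1 = y.1 + 1 ∧ y.2.2 = x.2.1)
  symm := by
    constructor
    rintro x y (⟨h1, h2, h3⟩ | ⟨h1, h2⟩ | ⟨h1, h2⟩)
    · exact Or.inl ⟨h1.symm, Ne.symm h2, Ne.symm h3⟩
    · exact Or.inr (Or.inr ⟨h1, h2⟩)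
    · exact Or.inr (Or.inl ⟨h1, h2⟩)
  loopless := by
    constructor
    rintro x (⟨h1, h2, h3⟩ | ⟨h1, h2⟩ | ⟨h1, h2⟩)
    · exact h2 rfl
    · exact absurd h1 (by simp [Fin.ext_iff])
    · exact absurd h1 (by simp [Fin.ext_iff])

/-- The vertex set of an induced subgraph of Σ given by index sets I₁, I₂, I₃
(for the tiles r, s, t respectively; indices are 0-based). -/
def SigmaSubset (I₁ I₂ I₃ : Set (Fin 3 × Fin 3)) : Set (Fin 3 × Fin 3 × Fin 3) :=
  {x | (x.1 = 0 ∧ (x.2.1, x.2.2) ∈ I₁) ∨ (x.1 = 1 ∧ (x.2.1, x.2.2) ∈ I₂) ∨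
       (x.1 = 2 ∧ (x.2.1, x.2.2) ∈ I₃)}


def F9RawAdj (x y : Fin 3 × Fin 3 × Fin 3) : Prop :=
  (x.1 = y.1 ∧ x.2.1 ≠ y.2.1 ∧ x.2.2 ≠ y.2.2) ∨
  (y.1 = x.1 + 1 ∧ x.2.2 = y.2.1) ∨
  (x.1 = y.1 + 1 ∧ y.2.2 = x.2.1)

instance : DecidableRel F9RawAdj := fun _ _ =>
  inferInstanceAs (Decidable (_ ∨ _ ∨ _))

def F9Allowed (x : Fin 3 × Fin 3 × Fin 3) : Prop :=
  (x.1 = 0 → x.2 ≠ (0,0) ∧ x.2 ≠ (1,1) ∧ x.2 ≠ (1,2)) ∧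
  (x.1 = 1 → x.2 ≠ (0,1) ∧ x.2 ≠ (0,2)) ∧
  (x.1 = 2 → x.2.2 ≠ 0)

instance : DecidablePred F9Allowed := fun _ =>
  inferInstanceAs (Decidable (_ ∧ _ ∧ _))

set_option synthInstance.maxSize 4000 in
lemma F9key1 : ∀ x y : Fin 3 × Fin 3 × Fin 3,
    (x = (0,2,1) ∨ x = (0,2,2) ∨ x = (1,0,0) ∨ x = (2,1,1) ∨ x = (2,2,1)) →
    (y = (0,2,1) ∨ y = (0,2,2) ∨ y = (1,0,0) ∨ y = (2,1,1) ∨ y = (2,2,1)) →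
    F9RawAdj x y →
    (x = (0,2,1) ∨ x = (0,2,2) ∨ x = (1,0,0)) ∨
    (y = (0,2,1) ∨ y = (0,2,2) ∨ y = (1,0,0)) := by decide

set_option synthInstance.maxSize 4000 in
set_option maxHeartbeats 2000000 in
lemma F9key2 : ∀ x y z : Fin 3 × Fin 3 × Fin 3,
    F9Allowed x → F9Allowed y → F9Allowed z →
    F9RawAdj x y → F9RawAdj x z → F9RawAdj y z →
    (x = (0,2,1) ∨ x = (0,2,2) ∨ x = (1,0,0)) ∨
    (y = (0,2,1) ∨ y = (0,2,2) ∨ y = (1,0,0)) ∨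
    (z = (0,2,1) ∨ z = (0,2,2) ∨ z = (1,0,0)) := by decide

/-- Every prismatic graph in the class F₉ admits a hitting set of its triangles of
cardinality at most 3; indeed {r³₂, r³₃, s¹₁} = {(0,2,1),(0,2,2),(1,0,0)} is such a
hitting set (0-based indices; the paper's indices are 1-based).  G is obtained from the
subgraph of Σ induced on the vertices given by I₁, I₂, I₃ by adding a new vertex z
(the summand Unit) adjacent to r³₂, r³₃, s¹₁, to t²₂ = (2,1,1) if (1,1) ∈ I₃, and to
t³₂ = (2,2,1) if (2,1) ∈ I₃. -/
theorem class_F9_hitting_card_le_three (I₁ I₂ I₃ : Set (Fin 3 × Fin 3))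
    (hI₁ : (1, 0) ∈ I₁ ∧ (2, 0) ∈ I₁ ∧ (2, 1) ∈ I₁ ∧ (2, 2) ∈ I₁ ∧
      ((0, 1) ∈ I₁ ∨ (0, 2) ∈ I₁) ∧ (0, 0) ∉ I₁ ∧ (1, 1) ∉ I₁ ∧ (1, 2) ∉ I₁)
    (hI₂ : (0, 0) ∈ I₂ ∧ (1, 1) ∈ I₂ ∧ (2, 2) ∈ I₂ ∧ (0, 1) ∉ I₂ ∧ (0, 2) ∉ I₂)
    (hI₃ : (0, 2) ∈ I₃ ∧ (1, 2) ∈ I₃ ∧ (2, 2) ∈ I₃ ∧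
      ((0, 1) ∈ I₃ ∨ (1, 1) ∈ I₃ ∨ (2, 1) ∈ I₃) ∧
      (0, 0) ∉ I₃ ∧ (1, 0) ∉ I₃ ∧ (2, 0) ∉ I₃)
    (hlast : ((0, 1) ∈ I₁ ∧ (0, 2) ∈ I₁) ∨
      ((0, 1) ∈ I₃ ∧ ((1, 1) ∈ I₃ ∨ (2, 1) ∈ I₃)))
    (G : SimpleGraph (SigmaSubset I₁ I₂ I₃ ⊕ Unit))
    (hAdjUU : ∀ u v : SigmaSubset I₁ I₂ I₃,
      G.Adj (Sum.inl u) (Sum.inl v) ↔ SchlafliC.Adj u.1 v.1)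
    (hAdjz : ∀ u : SigmaSubset I₁ I₂ I₃,
      G.Adj (Sum.inl u) (Sum.inr ()) ↔
        u.1 ∈ ({((0, 2, 1) : Fin 3 × Fin 3 × Fin 3), (0, 2, 2), (1, 0, 0),
          (2, 1, 1), (2, 2, 1)} : Set (Fin 3 × Fin 3 × Fin 3)))
    (hG : Prismatic G) :
    ∃ S : Finset (SigmaSubset I₁ I₂ I₃ ⊕ Unit), S.card ≤ 3 ∧
      (∀ w : SigmaSubset I₁ I₂ I₃ ⊕ Unit, w ∈ S ↔
        ∃ u : SigmaSubset I₁ I₂ I₃, w = Sum.inl u ∧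
          u.1 ∈ ({((0, 2, 1) : Fin 3 × Fin 3 × Fin 3), (0, 2, 2), (1, 0, 0)} :
            Set (Fin 3 × Fin 3 × Fin 3))) ∧
      ∀ p q r : SigmaSubset I₁ I₂ I₃ ⊕ Unit, G.Adj p q → G.Adj p r → G.Adj q r →
        (p ∈ S ∨ q ∈ S ∨ r ∈ S) := by
  
  classical
  have ha : ((0,2,1) : Fin 3 × Fin 3 × Fin 3) ∈ SigmaSubset I₁ I₂ I₃ :=
    Or.inl ⟨rfl, hI₁.2.2.1⟩
  have hb : ((0,2,2) : Fin 3 × Fin 3 × Fin 3) ∈ SigmaSubset I₁ I₂ I₃ :=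
    Or.inl ⟨rfl, hI₁.2.2.2.1⟩
  have hc : ((1,0,0) : Fin 3 × Fin 3 × Fin 3) ∈ SigmaSubset I₁ I₂ I₃ :=
    Or.inr (Or.inl ⟨rfl, hI₂.1⟩)
  set va : SigmaSubset I₁ I₂ I₃ := ⟨_, ha⟩ with hva
  set vb : SigmaSubset I₁ I₂ I₃ := ⟨_, hb⟩ with hvb
  set vc : SigmaSubset I₁ I₂ I₃ := ⟨_, hc⟩ with hvc
  have hmemS : ∀ u : SigmaSubset I₁ I₂ I₃,
      (u.1 = (0,2,1) ∨ u.1 = (0,2,2) ∨ u.1 = (1,0,0)) →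
      Sum.inl u ∈ ({Sum.inl va, Sum.inl vb, Sum.inl vc} :
        Finset (SigmaSubset I₁ I₂ I₃ ⊕ Unit)) := by
    intro u hu
    simp only [Finset.mem_insert, Finset.mem_singleton]
    rcases hu with h | h | h
    · exact Or.inl (congrArg Sum.inl (Subtype.ext h))
    · exact Or.inr (Or.inl (congrArg Sum.inl (Subtype.ext h)))
    · exact Or.inr (Or.inr (congrArg Sum.inl (Subtype.ext h)))
  refine ⟨{Sum.inl va, Sum.inl vb, Sum.inl vc}, ?_, ?_, ?_⟩
  · exact (Finset.card_insert_le _ _).trans (by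
      have := Finset.card_insert_le (Sum.inl vb)
        ({Sum.inl vc} : Finset (SigmaSubset I₁ I₂ I₃ ⊕ Unit))
      simp only [Finset.card_singleton] at this
      omega)
  · intro w
    simp only [Finset.mem_insert, Finset.mem_singleton]
    constructor
    · rintro (rfl | rfl | rfl)
      · exact ⟨va, rfl, Or.inl rfl⟩
      · exact ⟨vb, rfl, Or.inr (Or.inl rfl)⟩
      · exact ⟨vc, rfl, Or.inr (Or.inr rfl)⟩
    · rintro ⟨u, rfl, hu⟩
      simp only [Set.mem_insert_iff, Set.mem_singleton_iff] at hu
      have := hmemS u hu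
      simpa only [Finset.mem_insert, Finset.mem_singleton] using this
  · have hall : ∀ u : SigmaSubset I₁ I₂ I₃, F9Allowed u.1 := by
      rintro ⟨x, hx | hx | hx⟩
      · refine ⟨fun _ => ?_, fun h1 => absurd h1 (by rw [hx.1]; decide),
          fun h2 => absurd h2 (by rw [hx.1]; decide)⟩
        refine ⟨fun h => ?_, fun h => ?_, fun h => ?_⟩
        · exact hI₁.2.2.2.2.2.1 (by rw [← h]; exact hx.2)
        · exact hI₁.2.2.2.2.2.2.1 (by rw [← h]; exact hx.2)
        · exact hI₁.2.2.2.2.2.2.2 (by rw [← h]; exact hx.2)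
      · refine ⟨fun h0 => absurd h0 (by rw [hx.1]; decide), fun _ => ?_,
          fun h2 => absurd h2 (by rw [hx.1]; decide)⟩
        refine ⟨fun h => ?_, fun h => ?_⟩
        · exact hI₂.2.2.2.1 (by rw [← h]; exact hx.2)
        · exact hI₂.2.2.2.2 (by rw [← h]; exact hx.2)
      · refine ⟨fun h0 => absurd h0 (by rw [hx.1]; decide),
          fun h1 => absurd h1 (by rw [hx.1]; decide), fun _ hcol => ?_⟩
        have hx2 : (x.2.1, x.2.2) ∈ I₃ := hx.2
        rw [hcol] at hx2
        have : x.2.1 = 0 ∨ x.2.1 = 1 ∨ x.2.1 = 2 := by omega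
        rcases this with h | h | h <;> rw [h] at hx2
        · exact hI₃.2.2.2.2.1 hx2
        · exact hI₃.2.2.2.2.2.1 hx2
        · exact hI₃.2.2.2.2.2.2 hx2
    have hz5 : ∀ u : SigmaSubset I₁ I₂ I₃, G.Adj (Sum.inl u) (Sum.inr ()) →
        (u.1 = (0,2,1) ∨ u.1 = (0,2,2) ∨ u.1 = (1,0,0) ∨ u.1 = (2,1,1) ∨
          u.1 = (2,2,1)) := by
      intro u h
      have := (hAdjz u).mp h
      simpa only [Set.mem_insert_iff, Set.mem_singleton_iff] using this
    intro p q r hpq hpr hqr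
    rcases p with u | t
    · rcases q with v | t
      · rcases r with w | t
        · -- all three in Σ
          have h1 : F9RawAdj u.1 v.1 := (hAdjUU u v).mp hpq
          have h2 : F9RawAdj u.1 w.1 := (hAdjUU u w).mp hpr
          have h3 : F9RawAdj v.1 w.1 := (hAdjUU v w).mp hqr
          rcases F9key2 u.1 v.1 w.1 (hall u) (hall v) (hall w) h1 h2 h3 with
            h | h | h
          · exact Or.inl (hmemS u h)
          · exact Or.inr (Or.inl (hmemS v h))
          · exact Or.inr (Or.inr (hmemS w h))
        · -- r is z
          cases t
          have h1 : F9RawAdj u.1 v.1 := (hAdjUU u v).mp hpq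
          rcases F9key1 u.1 v.1 (hz5 u hpr) (hz5 v hqr) h1 with h | h
          · exact Or.inl (hmemS u h)
          · exact Or.inr (Or.inl (hmemS v h))
      · -- q is z
        cases t
        rcases r with w | t
        · have h1 : F9RawAdj u.1 w.1 := (hAdjUU u w).mp hpr
          rcases F9key1 u.1 w.1 (hz5 u hpq) (hz5 w (G.adj_symm hqr)) h1 with h | h
          · exact Or.inl (hmemS u h)
          · exact Or.inr (Or.inr (hmemS w h))
        · cases t; exact absurd hqr (G.loopless.irrefl _)
    · -- p is z
      cases t
      rcases q with v | t
      · rcases r with w | t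
        · have h1 : F9RawAdj v.1 w.1 := (hAdjUU v w).mp hqr
          rcases F9key1 v.1 w.1 (hz5 v (G.adj_symm hpq)) (hz5 w (G.adj_symm hpr))
              h1 with h | h
          · exact Or.inr (Or.inl (hmemS v h))
          · exact Or.inr (Or.inr (hmemS w h))
        · cases t; exact absurd hpr (G.loopless.irrefl _)
      · cases t; exact absurd hpq (G.loopless.irrefl _)
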